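/- Steiner/Euler lower bound for circumscribed ellipses of a triangle: let p₁, p₂, p₃ ∈ ℝ² be affinely independent points, and let A, B, C, D, E, F be real numbers with A > 0 and A·C − B² > 0 such that Q(x,y) = A·x² + 2B·x·y + C·y² + 2D·x + 2E·y + F vanishes at p₁, p₂ and p₃. Then the two-dimensional Lebesgue measure of {(x,y) ∈ ℝ² : Q(x,y) ≤ 0} is at least (4π/(3·√3)) · (1/2)·|det(p₂ − p₁, p₃ − p₁)|, i.e. at least 4π/(3√3) times the area of the triangle p₁p₂p₃. -/

import Mathlib

open Set MeasureTheory

private lemma steiner_det_ne (p₁ p₂ p₃ : ℝ × ℝ) (hind : AffineIndependent ℝ ![p₁, p₂, p₃]) :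
    (p₂.1 - p₁.1) * (p₃.2 - p₁.2) - (p₂.2 - p₁.2) * (p₃.1 - p₁.1) ≠ 0 := by
  intro h0
  apply affineIndependent_iff_not_collinear_set.mp hind
  rw [collinear_iff_of_mem (Set.mem_insert p₁ _)]
  by_cases hu : (p₂.1 - p₁.1) ^ 2 + (p₂.2 - p₁.2) ^ 2 = 0
  · have h1 : p₂.1 = p₁.1 := by nlinarith [sq_nonneg (p₂.1 - p₁.1), sq_nonneg (p₂.2 - p₁.2)]
    have h2 : p₂.2 = p₁.2 := by nlinarith [sq_nonneg (p₂.1 - p₁.1), sq_nonneg (p₂.2 - p₁.2)]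
    refine ⟨(p₃.1 - p₁.1, p₃.2 - p₁.2), ?_⟩
    rintro p (rfl | rfl | rfl)
    · exact ⟨0, by simp [Prod.ext_iff]⟩
    · exact ⟨0, by simp [Prod.ext_iff]; constructor <;> linarith⟩
    · exact ⟨1, by simp [Prod.ext_iff]⟩
  · refine ⟨(p₂.1 - p₁.1, p₂.2 - p₁.2), ?_⟩
    rintro q (rfl | rfl | hq)
    · exact ⟨0, by simp [Prod.ext_iff]⟩
    · exact ⟨1, by simp [Prod.ext_iff]⟩
    · rw [Set.mem_singleton_iff] at hq
      subst hq
      refine ⟨((p₂.1 - p₁.1) * (q.1 - p₁.1) + (p₂.2 - p₁.2) * (q.2 - p₁.2)) /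
        ((p₂.1 - p₁.1) ^ 2 + (p₂.2 - p₁.2) ^ 2), ?_⟩
      have e1 : (q.1 - p₁.1) * ((p₂.1 - p₁.1) ^ 2 + (p₂.2 - p₁.2) ^ 2)
          = ((p₂.1 - p₁.1) * (q.1 - p₁.1) + (p₂.2 - p₁.2) * (q.2 - p₁.2)) * (p₂.1 - p₁.1) := by
        linear_combination (-(p₂.2 - p₁.2)) * h0
      have e2 : (q.2 - p₁.2) * ((p₂.1 - p₁.1) ^ 2 + (p₂.2 - p₁.2) ^ 2)
          = ((p₂.1 - p₁.1) * (q.1 - p₁.1) + (p₂.2 - p₁.2) * (q.2 - p₁.2)) * (p₂.2 - p₁.2) := by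
        linear_combination (p₂.1 - p₁.1) * h0
      simp only [Prod.ext_iff, Prod.smul_fst, Prod.smul_snd, smul_eq_mul, Prod.fst_add,
        Prod.snd_add, Prod.vadd_def, vadd_eq_add]
      constructor
      · field_simp
        linarith [e1]
      · field_simp
        linarith [e2]

private lemma steiner_core {a b c : ℝ} (ha : 0 < a) (hc : 0 < c) (hd : 0 < a*c - b^2) :
    64*(a*c-b^2)^3 ≤ 27*a^2*c^2*(a+c-2*b)^2 := by
  obtain ⟨m, hm, hme⟩ : ∃ m : ℝ, 0 < m ∧ m^2 = a*c :=
    ⟨Real.sqrt (a*c), Real.sqrt_pos.2 (by positivity), Real.sq_sqrt (by positivity)⟩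
  have hbm : b < m := by nlinarith
  have hmb : -m < b := by nlinarith
  have h1 : 2*m ≤ a + c := by nlinarith [sq_nonneg (a - c)]
  have h3 : 16*(m-b)*(m+b)^3 ≤ 27*m^4 := by
    nlinarith [sq_nonneg (2*b - m), sq_nonneg (m+b),
      mul_pos (sub_pos.2 hbm) (by nlinarith : (0:ℝ) < m + b)]
  have h2 : 0 < a + c - 2*b := by nlinarith
  calc 64*(a*c-b^2)^3 = 16*(m-b)*(m+b)^3 * (4*(m-b)^2) := by rw [← hme]; ring
    _ ≤ 16*(m-b)*(m+b)^3 * (a+c-2*b)^2 := by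
        apply mul_le_mul_of_nonneg_left ?_
          (by nlinarith [mul_pos (sub_pos.2 hbm) (pow_pos (by linarith : (0:ℝ) < m+b) 3)])
        nlinarith
    _ ≤ 27*m^4 * (a+c-2*b)^2 := by nlinarith [sq_nonneg (a+c-2*b)]
    _ = 27*a^2*c^2*(a+c-2*b)^2 := by rw [show m^4 = (m^2)^2 by ring, hme]; ring

private lemma steiner_sum_pos {a b c : ℝ} (ha : 0 < a) (hc : 0 < c) (hd : 0 < a*c - b^2) :
    0 < a + c - 2*b := by nlinarith [sq_nonneg (a - c)]

private lemma steiner_rho_pos {a b c ρ : ℝ} (ha : 0 < a) (hc : 0 < c) (hd : 0 < a*c - b^2)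
    (hρ : 4*(a*c-b^2)*ρ = a*c*(a+c-2*b)) : 0 < ρ := by
  nlinarith [mul_pos (mul_pos ha hc) (steiner_sum_pos ha hc hd)]

private lemma steiner_disk_volume :
    volume {w : ℝ × ℝ | w.1^2 + w.2^2 ≤ 1} = NNReal.pi := by
  have hpre : Complex.measurableEquivRealProd ⁻¹' {w : ℝ × ℝ | w.1^2 + w.2^2 ≤ 1}
      = Metric.closedBall (0:ℂ) 1 := by
    ext z
    simp only [Set.mem_preimage, Complex.measurableEquivRealProd_apply, Set.mem_setOf_eq,
      Metric.mem_closedBall, Complex.dist_eq, sub_zero]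
    constructor
    · intro h
      have h2 : ‖z‖ ^ 2 ≤ 1 := by rw [Complex.sq_norm, Complex.normSq_apply]; nlinarith
      nlinarith [norm_nonneg z]
    · intro h
      have h2 : ‖z‖ ^ 2 ≤ 1 := by nlinarith [norm_nonneg z]
      rw [Complex.sq_norm, Complex.normSq_apply] at h2; nlinarith
  have hmeas : MeasurableSet {w : ℝ × ℝ | w.1^2 + w.2^2 ≤ 1} := by
    apply measurableSet_le (by fun_prop) measurable_const
  rw [← Complex.volume_preserving_equiv_real_prod.measure_preimage hmeas.nullMeasurableSet,
    hpre, Complex.volume_closedBall]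
  simp

private lemma steiner_E3 {a b c ρ k1 k2 k3 sδ : ℝ} (hρpos : 0 < ρ)
    (hsδ : sδ^2 = a*c - b^2)
    (E1 : a*k1^2 = ρ) (E2 : a*k1*k2 + b*k1*k3 = 0) (E4 : k1*k3*sδ = ρ) :
    a*k2^2 + 2*b*k2*k3 + c*k3^2 = ρ := by
  have h' : ρ*(a*k2^2 + 2*b*k2*k3 + c*k3^2) = ρ*ρ := by
    linear_combination (-(a*k2^2 + 2*b*k2*k3 + c*k3^2))*E1 + (a*k1*k2 + b*k1*k3)*E2
      - (k1*k3)^2*hsδ + (ρ + k1*k3*sδ)*E4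
  exact mul_left_cancel₀ (ne_of_gt hρpos) h'

private lemma steiner_k_exists {a b c ρ : ℝ} (ha : 0 < a) (hδpos : 0 < a*c - b^2)
    (hρpos : 0 < ρ) :
    ∃ k1 k2 k3 : ℝ, 0 < k1 ∧ 0 < k3 ∧ a*k1^2 = ρ ∧ a*k1*k2 + b*k1*k3 = 0
      ∧ k1*k3*Real.sqrt (a*c - b^2) = ρ := by
  set sδ : ℝ := Real.sqrt (a*c - b^2)
  have hsδpos : 0 < sδ := Real.sqrt_pos.mpr hδpos
  set sa : ℝ := Real.sqrt a with hsadef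
  have hsapos : 0 < sa := Real.sqrt_pos.mpr ha
  have hsa : sa^2 = a := Real.sq_sqrt ha.le
  set sρ : ℝ := Real.sqrt ρ with hsρdef
  have hsρpos : 0 < sρ := Real.sqrt_pos.mpr hρpos
  have hsρ : sρ^2 = ρ := Real.sq_sqrt hρpos.le
  refine ⟨sρ/sa, -(b*sρ)/(sa*sδ), sa*sρ/sδ, div_pos hsρpos hsapos,
    div_pos (mul_pos hsapos hsρpos) hsδpos, ?_, ?_, ?_⟩
  · field_simp
    linear_combination a*hsρ - ρ*hsa
  · field_simp
    linear_combination sρ^2*b*hsa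
  · field_simp
    linear_combination hsρ

private lemma steiner_div {δ ρ : ℝ} (hδpos : 0 < δ) (hstep : 64*δ^3 ≤ 432*δ^2*ρ^2) :
    4*δ ≤ 27*ρ^2 := by
  nlinarith [mul_pos hδpos hδpos]

private lemma steiner_sqrt_step {sδ ρ s3 : ℝ} (h27 : 4*sδ^2 ≤ 27*ρ^2) (hρpos : 0 < ρ)
    (hsδpos : 0 < sδ) (hs3pos : 0 < s3) (hs3sq : s3^2 = 3) : 2*sδ ≤ 3*s3*ρ := by
  nlinarith [sq_nonneg (3*s3*ρ - 2*sδ), mul_pos hρpos hs3pos]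

private lemma steiner_h27 {a b c ρ : ℝ} (ha : 0 < a) (hc : 0 < c) (hδpos : 0 < a*c - b^2)
    (hρ : 4*(a*c-b^2)*ρ = a*c*(a+c-2*b)) : 4*(a*c-b^2) ≤ 27*ρ^2 := by
  have hδ' := steiner_core ha hc hδpos
  have hsq : (4*(a*c-b^2)*ρ)^2 = (a*c*(a+c-2*b))^2 := by rw [hρ]
  have hstep : 64*(a*c-b^2)^3 ≤ 432*(a*c-b^2)^2*ρ^2 := by nlinarith [hsq, hδ']
  exact steiner_div hδpos hstep

set_option maxHeartbeats 2000000 in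
/-- E692 / Steiner: any ellipse `{(x,y) : A·x² + 2B·x·y + C·y² + 2D·x + 2E·y + F ≤ 0}`
passing through three affinely independent points `p₁, p₂, p₃` has area at least
`(4π/(3√3))` times the area of the triangle `p₁p₂p₃`. -/
theorem steiner_euler_lower_bound (p₁ p₂ p₃ : ℝ × ℝ)
    (hind : AffineIndependent ℝ ![p₁, p₂, p₃])
    (A B C D E F : ℝ) (hA : 0 < A) (hdisc : 0 < A * C - B ^ 2)
    (h1 : A * p₁.1 ^ 2 + 2 * B * p₁.1 * p₁.2 + C * p₁.2 ^ 2
      + 2 * D * p₁.1 + 2 * E * p₁.2 + F = 0)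
    (h2 : A * p₂.1 ^ 2 + 2 * B * p₂.1 * p₂.2 + C * p₂.2 ^ 2
      + 2 * D * p₂.1 + 2 * E * p₂.2 + F = 0)
    (h3 : A * p₃.1 ^ 2 + 2 * B * p₃.1 * p₃.2 + C * p₃.2 ^ 2
      + 2 * D * p₃.1 + 2 * E * p₃.2 + F = 0) :
    ENNReal.ofReal ((4 * Real.pi / (3 * Real.sqrt 3)) *
        ((1 : ℝ) / 2 * |(p₂.1 - p₁.1) * (p₃.2 - p₁.2) - (p₂.2 - p₁.2) * (p₃.1 - p₁.1)|)) ≤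
      MeasureTheory.volume
        {p : ℝ × ℝ | A * p.1 ^ 2 + 2 * B * p.1 * p.2 + C * p.2 ^ 2
          + 2 * D * p.1 + 2 * E * p.2 + F ≤ 0} := by
  obtain ⟨u1, u2, v1, v2, hu1, hu2, hv1, hv2⟩ :
      ∃ u1 u2 v1 v2 : ℝ, u1 = p₂.1 - p₁.1 ∧ u2 = p₂.2 - p₁.2
        ∧ v1 = p₃.1 - p₁.1 ∧ v2 = p₃.2 - p₁.2 := ⟨_, _, _, _, rfl, rfl, rfl, rfl⟩
  have hΔ : u1*v2 - u2*v1 ≠ 0 := by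
    rw [hu1, hu2, hv1, hv2]; exact steiner_det_ne p₁ p₂ p₃ hind
  rw [show (p₂.1 - p₁.1) * (p₃.2 - p₁.2) - (p₂.2 - p₁.2) * (p₃.1 - p₁.1) = u1*v2 - u2*v1 by
    rw [hu1, hu2, hv1, hv2]]
  obtain ⟨a, b, c, hadef, hbdef, hcdef⟩ :
      ∃ a b c : ℝ, a = A*u1^2 + 2*B*u1*u2 + C*u2^2
        ∧ b = A*u1*v1 + B*(u1*v2 + u2*v1) + C*u2*v2
        ∧ c = A*v1^2 + 2*B*v1*v2 + C*v2^2 := ⟨_, _, _, rfl, rfl, rfl⟩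
  have hδpos : 0 < a*c - b^2 := by
    have hid : a*c - b^2 = (u1*v2 - u2*v1)^2 * (A*C - B^2) := by
      rw [hadef, hbdef, hcdef]; ring
    rw [hid]
    exact mul_pos (lt_of_le_of_ne (sq_nonneg _) (Ne.symm (pow_ne_zero 2 hΔ))) hdisc
  have hδne : a*c - b^2 ≠ 0 := ne_of_gt hδpos
  -- reduction of the quadratic to barycentric-type coordinates
  have hQP : ∀ s t : ℝ,
      A * (p₁.1 + s*u1 + t*v1) ^ 2 + 2 * B * (p₁.1 + s*u1 + t*v1) * (p₁.2 + s*u2 + t*v2)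
        + C * (p₁.2 + s*u2 + t*v2) ^ 2 + 2 * D * (p₁.1 + s*u1 + t*v1)
        + 2 * E * (p₁.2 + s*u2 + t*v2) + F
      = a*s^2 + 2*b*s*t + c*t^2 - a*s - c*t := by
    intro s t
    rw [hadef, hbdef, hcdef, hu1, hu2, hv1, hv2]
    linear_combination (1 - s - t)*h1 + s*h2 + t*h3
  clear h1 h2 h3 hind
  have ha : 0 < a := by
    rcases eq_or_ne u2 0 with h|h
    · have hu1ne : u1 ≠ 0 := fun h' => hΔ (by rw [h, h']; ring)
      have h2' : 0 < u1^2 := lt_of_le_of_ne (sq_nonneg _) (Ne.symm (pow_ne_zero 2 hu1ne))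
      rw [hadef, h]; nlinarith
    · have h2' : 0 < u2^2 := lt_of_le_of_ne (sq_nonneg _) (Ne.symm (pow_ne_zero 2 h))
      have hkey : A*a = (A*u1 + B*u2)^2 + (A*C - B^2)*u2^2 := by rw [hadef]; ring
      nlinarith [sq_nonneg (A*u1 + B*u2), mul_pos hdisc h2']
  have hc : 0 < c := by
    rcases eq_or_ne v2 0 with h|h
    · have hv1ne : v1 ≠ 0 := fun h' => hΔ (by rw [h, h']; ring)
      have h2' : 0 < v1^2 := lt_of_le_of_ne (sq_nonneg _) (Ne.symm (pow_ne_zero 2 hv1ne))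
      rw [hcdef, h]; nlinarith
    · have h2' : 0 < v2^2 := lt_of_le_of_ne (sq_nonneg _) (Ne.symm (pow_ne_zero 2 h))
      have hkey : A*c = (A*v1 + B*v2)^2 + (A*C - B^2)*v2^2 := by rw [hcdef]; ring
      nlinarith [sq_nonneg (A*v1 + B*v2), mul_pos hdisc h2']
  -- center and level of the ellipse
  obtain ⟨s₀, t₀, hc1, hc2⟩ : ∃ s₀ t₀ : ℝ, a*s₀ + b*t₀ = a/2 ∧ b*s₀ + c*t₀ = c/2 :=
    ⟨c*(a-b)/(2*(a*c-b^2)), a*(c-b)/(2*(a*c-b^2)), by field_simp; ring, by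
      rw [mul_div_assoc', mul_div_assoc', ← add_div, div_eq_iff (mul_ne_zero two_ne_zero hδne)]; ring⟩
  obtain ⟨ρ, hρ⟩ : ∃ ρ : ℝ, 4*(a*c-b^2)*ρ = a*c*(a+c-2*b) :=
    ⟨a*c*(a+c-2*b)/(4*(a*c-b^2)), by field_simp⟩
  have hρpos : 0 < ρ := steiner_rho_pos ha hc hδpos hρ
  have hρ2 : a*s₀ + c*t₀ = 2*ρ := by
    have hds : (a*c-b^2)*s₀ = c*(a-b)/2 := by linear_combination c*hc1 - b*hc2
    have hdt : (a*c-b^2)*t₀ = a*(c-b)/2 := by linear_combination a*hc2 - b*hc1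
    have hmm : (a*c-b^2)*(a*s₀ + c*t₀) = (a*c-b^2)*(2*ρ) := by
      linear_combination a*hds + c*hdt - (1/2)*hρ
    exact mul_left_cancel₀ hδne hmm
  have KEY : ∀ s t : ℝ, a*s^2 + 2*b*s*t + c*t^2 - a*s - c*t
      = a*(s-s₀)^2 + 2*b*(s-s₀)*(t-t₀) + c*(t-t₀)^2 - ρ := by
    intro s t
    linear_combination (2*s - s₀)*hc1 + (2*t - t₀)*hc2 - (1/2)*hρ2
  -- square-root data
  obtain ⟨sδ, hsδdef⟩ : ∃ x : ℝ, x = Real.sqrt (a*c - b^2) := ⟨_, rfl⟩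
  have hsδpos : 0 < sδ := hsδdef ▸ Real.sqrt_pos.mpr hδpos
  have hsδ : sδ^2 = a*c - b^2 := hsδdef ▸ Real.sq_sqrt hδpos.le
  obtain ⟨k1, k2, k3, hk1pos, hk3pos, E1, E2, E4⟩ :
      ∃ k1 k2 k3 : ℝ, 0 < k1 ∧ 0 < k3 ∧ a*k1^2 = ρ ∧ a*k1*k2 + b*k1*k3 = 0
        ∧ k1*k3*sδ = ρ := by
    rw [hsδdef]
    exact steiner_k_exists ha hδpos hρpos
  have E3 : a*k2^2 + 2*b*k2*k3 + c*k3^2 = ρ := steiner_E3 hρpos hsδ E1 E2 E4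
  have MAIN : ∀ w1 w2 : ℝ,
      a*(s₀ + (k1*w1 + k2*w2))^2 + 2*b*(s₀ + (k1*w1 + k2*w2))*(t₀ + k3*w2)
        + c*(t₀ + k3*w2)^2 - a*(s₀ + (k1*w1 + k2*w2)) - c*(t₀ + k3*w2)
      = ρ*(w1^2 + w2^2) - ρ := by
    intro w1 w2
    have hq : a*(k1*w1 + k2*w2)^2 + 2*b*(k1*w1 + k2*w2)*(k3*w2) + c*(k3*w2)^2
        = ρ*(w1^2 + w2^2) := by
      linear_combination (w1^2)*E1 + (2*w1*w2)*E2 + (w2^2)*E3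
    linear_combination KEY (s₀ + (k1*w1 + k2*w2)) (t₀ + k3*w2) + hq
  -- the linear map and translation
  set Lmap : (ℝ × ℝ) →ₗ[ℝ] (ℝ × ℝ) :=
    Matrix.toLin (Module.Basis.finTwoProd ℝ) (Module.Basis.finTwoProd ℝ)
      !![k1*u1, k2*u1 + k3*v1; k1*u2, k2*u2 + k3*v2] with hL
  have hLapp : ∀ w : ℝ × ℝ,
      Lmap w = (k1*u1*w.1 + (k2*u1 + k3*v1)*w.2, k1*u2*w.1 + (k2*u2 + k3*v2)*w.2) := by
    intro w
    rw [hL]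
    exact Matrix.toLin_finTwoProd_apply _ _ _ _ w
  set c₀ : ℝ × ℝ := (p₁.1 + s₀*u1 + t₀*v1, p₁.2 + s₀*u2 + t₀*v2) with hc₀
  -- the set is the affine image of the unit disk
  have hset : {p : ℝ × ℝ | A * p.1 ^ 2 + 2 * B * p.1 * p.2 + C * p.2 ^ 2
          + 2 * D * p.1 + 2 * E * p.2 + F ≤ 0}
      = (fun w => c₀ + Lmap w) '' {w : ℝ × ℝ | w.1^2 + w.2^2 ≤ 1} := by
    ext p
    simp only [Set.mem_setOf_eq, Set.mem_image]
    constructor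
    · intro hQp
      obtain ⟨s, t, hsdef, htdef⟩ : ∃ s t : ℝ,
          s = ((p.1 - p₁.1)*v2 - (p.2 - p₁.2)*v1)/(u1*v2 - u2*v1)
          ∧ t = ((p.2 - p₁.2)*u1 - (p.1 - p₁.1)*u2)/(u1*v2 - u2*v1) := ⟨_, _, rfl, rfl⟩
      have hps : p.1 = p₁.1 + s*u1 + t*v1 := by
        rw [hsdef, htdef, div_mul_eq_mul_div, div_mul_eq_mul_div, add_assoc, ← add_div,
          ← sub_eq_iff_eq_add', eq_div_iff hΔ]; ring
      have hpt : p.2 = p₁.2 + s*u2 + t*v2 := by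
        rw [hsdef, htdef, div_mul_eq_mul_div, div_mul_eq_mul_div, add_assoc, ← add_div,
          ← sub_eq_iff_eq_add', eq_div_iff hΔ]; ring
      obtain ⟨w2, hw2def⟩ : ∃ x : ℝ, x = (t - t₀)/k3 := ⟨_, rfl⟩
      obtain ⟨w1, hw1def⟩ : ∃ x : ℝ, x = (s - s₀ - k2*w2)/k1 := ⟨_, rfl⟩
      have htw : t = t₀ + k3*w2 := by
        rw [hw2def]; field_simp; ring
      have hsw : s = s₀ + (k1*w1 + k2*w2) := by
        rw [hw1def]; field_simp; ring
      have hM := MAIN w1 w2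
      rw [← hsw, ← htw] at hM
      rw [hps, hpt, hQP s t, hM] at hQp
      have hw12 : w1^2 + w2^2 ≤ 1 := by
        have h' : ρ*(w1^2 + w2^2) ≤ ρ*1 := by linarith
        exact le_of_mul_le_mul_left h' hρpos
      refine ⟨(w1, w2), by simpa using hw12, ?_⟩
      have hpe1 : (c₀ + Lmap (w1, w2)).1 = p.1 := by
        rw [Prod.fst_add, hLapp, hc₀, hps]
        dsimp only
        linear_combination (-u1)*hsw + (-v1)*htw
      have hpe2 : (c₀ + Lmap (w1, w2)).2 = p.2 := by
        rw [Prod.snd_add, hLapp, hc₀, hpt]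
        dsimp only
        linear_combination (-u2)*hsw + (-v2)*htw
      exact Prod.ext hpe1 hpe2
    · rintro ⟨w, hw, rfl⟩
      have hw' : w.1^2 + w.2^2 ≤ 1 := hw
      have hx : (c₀ + Lmap w).1 = p₁.1 + (s₀ + (k1*w.1 + k2*w.2))*u1 + (t₀ + k3*w.2)*v1 := by
        rw [Prod.fst_add, hLapp, hc₀]; dsimp only; ring
      have hy : (c₀ + Lmap w).2 = p₁.2 + (s₀ + (k1*w.1 + k2*w.2))*u2 + (t₀ + k3*w.2)*v2 := by
        rw [Prod.snd_add, hLapp, hc₀]; dsimp only; ring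
      rw [hx, hy, hQP (s₀ + (k1*w.1 + k2*w.2)) (t₀ + k3*w.2), MAIN w.1 w.2]
      have h' : ρ*(w.1^2 + w.2^2) ≤ ρ*1 := mul_le_mul_of_nonneg_left hw' hρpos.le
      linarith
  -- compute the volume
  have hdet : LinearMap.det Lmap = (k1*k3)*(u1*v2 - u2*v1) := by
    rw [hL, LinearMap.det_toLin, Matrix.det_fin_two_of]
    ring
  have hvol : MeasureTheory.volume
        {p : ℝ × ℝ | A * p.1 ^ 2 + 2 * B * p.1 * p.2 + C * p.2 ^ 2
          + 2 * D * p.1 + 2 * E * p.2 + F ≤ 0}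
      = ENNReal.ofReal |(k1*k3)*(u1*v2 - u2*v1)| * NNReal.pi := by
    rw [hset, show (fun w => c₀ + Lmap w) '' {w : ℝ × ℝ | w.1^2 + w.2^2 ≤ 1}
        = (fun x => c₀ + x) '' (⇑Lmap '' {w : ℝ × ℝ | w.1^2 + w.2^2 ≤ 1}) by
      rw [← Set.image_comp]; rfl]
    rw [Set.image_add_left, measure_preimage_add,
      MeasureTheory.Measure.addHaar_image_linearMap, hdet, steiner_disk_volume]
  rw [hvol]
  clear hvol hset hLapp hdet MAIN KEY hQP hc1 hc2 hρ2 E1 E2 E3 hL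
  clear hc₀ c₀ Lmap
  -- final numeric comparison
  have h27 : 4*(a*c-b^2) ≤ 27*ρ^2 := steiner_h27 ha hc hδpos hρ
  have h27' : 4*sδ^2 ≤ 27*ρ^2 := by rw [hsδ]; exact h27
  have hs3pos : (0:ℝ) < Real.sqrt 3 := Real.sqrt_pos.mpr (by norm_num)
  have hs3sq : (Real.sqrt 3)^2 = 3 := Real.sq_sqrt (by norm_num)
  have hfin : 2*sδ ≤ 3*Real.sqrt 3*ρ := steiner_sqrt_step h27' hρpos hsδpos hs3pos hs3sq
  have hkk : 2 ≤ 3*Real.sqrt 3*(k1*k3) := by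
    have hcalc : 2*sδ ≤ (3*Real.sqrt 3*(k1*k3))*sδ := by
      calc 2*sδ ≤ 3*Real.sqrt 3*ρ := hfin
        _ = (3*Real.sqrt 3*(k1*k3))*sδ := by rw [← E4]; ring
    exact le_of_mul_le_mul_right hcalc hsδpos
  have hpi : (NNReal.pi : ENNReal) = ENNReal.ofReal Real.pi := by
    rw [← NNReal.coe_real_pi, ENNReal.ofReal_coe_nnreal]
  rw [hpi, ← ENNReal.ofReal_mul (abs_nonneg _)]
  apply ENNReal.ofReal_le_ofReal
  have habs : |(k1*k3)*(u1*v2 - u2*v1)| = (k1*k3)*|u1*v2 - u2*v1| := by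
    rw [abs_mul, abs_of_pos (mul_pos hk1pos hk3pos)]
  rw [habs]
  rw [div_mul_eq_mul_div, div_le_iff₀ (by positivity)]
  nlinarith [mul_le_mul_of_nonneg_right hkk
      (mul_nonneg (abs_nonneg (u1*v2 - u2*v1)) Real.pi_pos.le),
    Real.pi_pos, abs_nonneg (u1*v2 - u2*v1)]
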